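/- Let g₀, g₁, …, g_m : ℝ^n → ℝ^n be C¹ on an open neighborhood of 0 with g₀(0) = 0, и define f(x,u) := g₀(x) + Σ_{i=1}^m g_i(x) u_i. Suppose there is a linear subspace W ⊆ ℝ^n of dimension d < n such that g_i(x) ∈ W for all x in a neighborhood of 0 and all i = 0, 1, …, m. Then the control system ẋ = f(x,u) cannot be locally exponentially stabilized by means of continuously differentiable stationary feedback laws. -/

import Mathlib

open Metric Set Filter

noncomputable section

/-- `ℝ^n` with the Euclidean norm. -/
abbrev Euc (n : ℕ) : Type := EuclideanSpace ℝ (Fin n)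

/-- `ℝ^n × ℝ^m` identified with `ℝ^{n+m}` with its Euclidean norm. -/
abbrev EucProd (n m : ℕ) : Type := WithLp 2 (Euc n × Euc m)

/-- Build a point of `ℝ^n × ℝ^m`. -/
def mkProd {n m : ℕ} (x : Euc n) (u : Euc m) : EucProd n m :=
  (WithLp.equiv 2 (Euc n × Euc m)).symm (x, u)

def pFst {n m : ℕ} (p : EucProd n m) : Euc n := ((WithLp.equiv 2 (Euc n × Euc m)) p).1

def pSnd {n m : ℕ} (p : EucProd n m) : Euc m := ((WithLp.equiv 2 (Euc n × Euc m)) p).2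

/-- View a plain vector as a point of Euclidean space. -/
def vecE {n : ℕ} (v : Fin n → ℝ) : Euc n := WithLp.toLp 2 v

/-- `f` is linearly open around `z` with modulus `κ > 0`: on some neighborhood `U` of `z`,
`B_{κ r}(f w) ⊆ f (B_r w)` whenever `w ∈ U`, `r > 0`, and `B_r w ⊆ U`. -/
def LinOpenWith {E F : Type*} [NormedAddCommGroup E] [NormedAddCommGroup F]
    (f : E → F) (z : E) (κ : ℝ) : Prop :=
  0 < κ ∧ ∃ U ∈ nhds z, ∀ w ∈ U, ∀ r : ℝ, 0 < r → closedBall w r ⊆ U →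
      closedBall (f w) (κ * r) ⊆ f '' closedBall w r

/-- `f` is linearly open around `z` (with some modulus `κ > 0`). -/
def LinOpenAround {E F : Type*} [NormedAddCommGroup E] [NormedAddCommGroup F]
    (f : E → F) (z : E) : Prop :=
  ∃ κ : ℝ, LinOpenWith f z κ

/-- `f` is `C¹` on an open neighborhood of `z`. -/
def C1Near {E F : Type*} [NormedAddCommGroup E] [NormedSpace ℝ E]
    [NormedAddCommGroup F] [NormedSpace ℝ F] (f : E → F) (z : E) : Prop :=
  ∃ U : Set E, IsOpen U ∧ z ∈ U ∧ ContDiffOn ℝ 1 f U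

/-- The partial Jacobian matrix `A = ∂f/∂x(0,0)`. -/
def xJac {n m : ℕ} (f : EucProd n m → Euc n) : Matrix (Fin n) (Fin n) ℝ :=
  Matrix.of fun i j => fderiv ℝ f 0 (mkProd (EuclideanSpace.single j 1) 0) i

/-- The partial Jacobian matrix `B = ∂f/∂u(0,0)`. -/
def uJac {n m : ℕ} (f : EucProd n m → Euc n) : Matrix (Fin n) (Fin m) ℝ :=
  Matrix.of fun i j => fderiv ℝ f 0 (mkProd 0 (EuclideanSpace.single j 1)) i

/-- The set of complex eigenvalues of a real matrix. -/
def specC {n : ℕ} (A : Matrix (Fin n) (Fin n) ℝ) : Set ℂ :=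
  spectrum ℂ (A.map (Complex.ofReal : ℝ → ℂ))

/-- Local exponential stabilizability of `ẋ = f(x,u)` by stationary feedback laws
satisfying the regularity predicate `P`. -/
def ExpStabWith {n m : ℕ} (f : EucProd n m → Euc n) (P : (Euc n → Euc m) → Prop) : Prop :=
  ∃ u : Euc n → Euc m, P u ∧ u 0 = 0 ∧
    ∃ α : ℝ, 0 < α ∧ ∃ M : ℝ, 0 < M ∧ ∃ δ : ℝ, 0 < δ ∧
      ∀ x₀ : Euc n, ‖x₀‖ < δ →
        ∃ x : ℝ → Euc n,
          (x 0 = x₀ ∧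
            ∀ t ∈ Ici (0:ℝ), HasDerivWithinAt x (f (mkProd (x t) (u (x t)))) (Ici 0) t) ∧
          (∀ y : ℝ → Euc n,
            (y 0 = x₀ ∧
              ∀ t ∈ Ici (0:ℝ), HasDerivWithinAt y (f (mkProd (y t) (u (y t)))) (Ici 0) t) →
            ∀ t ∈ Ici (0:ℝ), y t = x t) ∧
          ∀ t ∈ Ici (0:ℝ), ‖x t‖ ≤ M * Real.exp (-α * t) * ‖x₀‖

/-- Local exponential stabilizability by continuous stationary feedback laws. -/
def ExpStabCont {n m : ℕ} (f : EucProd n m → Euc n) : Prop :=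
  ExpStabWith f Continuous

/-- Local exponential stabilizability by `C¹` stationary feedback laws. -/
def ExpStabC1 {n m : ℕ} (f : EucProd n m → Euc n) : Prop :=
  ExpStabWith f (fun u => ContDiff ℝ 1 u)

/-- Local asymptotic stabilizability of `ẋ = f(x,u)` by `C¹` stationary feedback laws. -/
def AsympStabC1 {n m : ℕ} (f : EucProd n m → Euc n) : Prop :=
  ∃ u : Euc n → Euc m, ContDiff ℝ 1 u ∧ u 0 = 0 ∧
    ((∀ ε : ℝ, 0 < ε → ∃ δ : ℝ, 0 < δ ∧ ∀ x : ℝ → Euc n, ‖x 0‖ < δ →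
        (∀ t ∈ Ici (0:ℝ), HasDerivWithinAt x (f (mkProd (x t) (u (x t)))) (Ici 0) t) →
        ∀ t ∈ Ici (0:ℝ), ‖x t‖ < ε) ∧
      ∃ δ₀ : ℝ, 0 < δ₀ ∧ ∀ x : ℝ → Euc n, ‖x 0‖ < δ₀ →
        (∀ t ∈ Ici (0:ℝ), HasDerivWithinAt x (f (mkProd (x t) (u (x t)))) (Ici 0) t) →
        Tendsto x atTop (nhds 0))

/-- Local asymptotic stabilizability of the discrete-time system `x_{k+1} = f(x_k,u_k)`
by continuous stationary feedback laws. -/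
def DiscAsympStabCont {n m : ℕ} (f : EucProd n m → Euc n) : Prop :=
  ∃ u : Euc n → Euc m, Continuous u ∧ u 0 = 0 ∧
    ((∀ ε : ℝ, 0 < ε → ∃ δ : ℝ, 0 < δ ∧ ∀ x₀ : Euc n, ‖x₀‖ < δ →
        ∀ k : ℕ, ‖(fun x => f (mkProd x (u x)))^[k] x₀‖ < ε) ∧
      ∃ δ₀ : ℝ, 0 < δ₀ ∧ ∀ x₀ : Euc n, ‖x₀‖ < δ₀ →
        Tendsto (fun k => (fun x => f (mkProd x (u x)))^[k] x₀) atTop (nhds 0))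

/-- if all the vector fields `g₀, g₁, …, g_m` take values in a subspace `W` of
dimension `d < n` near the origin, then `ẋ = g₀(x) + ∑ gᵢ(x) uᵢ` cannot be locally
exponentially stabilized by `C¹` stationary feedback laws. -/
theorem not_exp_stabilizable_of_low_dim {n m d : ℕ} (g : Fin (m + 1) → Euc n → Euc n)
    (hg : ∀ i, C1Near (g i) (0 : Euc n)) (hg0 : g 0 0 = 0)
    (W : Submodule ℝ (Euc n)) (hWd : Module.finrank ℝ W = d) (hdn : d < n)
    (hgW : ∃ U ∈ nhds (0 : Euc n), ∀ x ∈ U, ∀ i, g i x ∈ W) :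
    ¬ ExpStabC1 (fun p : EucProd n m =>
        g 0 (pFst p) + ∑ i : Fin m, (pSnd p) i • g i.succ (pFst p)) := by
  rintro ⟨u, -, hu0, α, hα, M, hM, δ, hδ, hx⟩
  obtain ⟨U, hU, hUW⟩ := hgW
  obtain ⟨ρ, hρ, hball⟩ := Metric.nhds_basis_closedBall.mem_iff.mp hU
  -- W is a proper subspace
  have hWtop : W ≠ ⊤ := by
    intro h
    rw [h] at hWd
    have : Module.finrank ℝ (⊤ : Submodule ℝ (Euc n)) = n := by
      simp [finrank_euclideanSpace]
    omega
  -- a nonzero vector orthogonal to W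
  obtain ⟨v, hvW, hv0⟩ : ∃ v ∈ Wᗮ, v ≠ 0 := by
    by_contra h
    push_neg at h
    have : Wᗮ = ⊥ := by
      apply (Submodule.eq_bot_iff _).mpr
      intro y hy
      by_contra hy0
      exact hy0 (h y hy)
    exact hWtop (Submodule.orthogonal_eq_bot_iff.mp this)
  have hvnorm : (0:ℝ) < ‖v‖ := norm_pos_iff.mpr hv0
  -- choose a small initial point along v
  set ε : ℝ := min δ (ρ / M) / 2 with hε
  have hεpos : 0 < ε := by positivity
  set x₀ : Euc n := (ε / ‖v‖) • v with hx₀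
  have hx₀norm : ‖x₀‖ = ε := by
    rw [hx₀, norm_smul, Real.norm_eq_abs, abs_of_pos (by positivity)]
    field_simp
  have hx₀δ : ‖x₀‖ < δ := by
    rw [hx₀norm]
    calc ε < min δ (ρ / M) := by rw [hε]; linarith [lt_min_iff.mpr ⟨hδ, div_pos hρ hM⟩]
    _ ≤ δ := min_le_left _ _
  obtain ⟨x, ⟨hx0, hxd⟩, -, hxbound⟩ := hx x₀ hx₀δ
  -- the trajectory stays in the closed ball of radius ρ
  have hxball : ∀ t ∈ Ici (0:ℝ), x t ∈ U := by
    intro t ht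
    apply hball
    rw [Metric.mem_closedBall, dist_zero_right]
    calc ‖x t‖ ≤ M * Real.exp (-α * t) * ‖x₀‖ := hxbound t ht
      _ ≤ M * 1 * ‖x₀‖ := by
          gcongr
          exact Real.exp_le_one_iff.mpr (by simp at ht ⊢; positivity)
      _ = M * ε := by rw [hx₀norm]; ring
      _ ≤ M * (ρ / M) := by
          gcongr
          calc ε ≤ min δ (ρ / M) := by rw [hε]; linarith [le_min_iff.mpr ⟨le_of_lt hδ, le_of_lt (div_pos hρ hM)⟩]
            _ ≤ ρ / M := min_le_right _ _
      _ = ρ := by field_simp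
  -- the velocity lies in W along the trajectory
  have hvelW : ∀ t ∈ Ici (0:ℝ),
      (g 0 (pFst (mkProd (x t) (u (x t)))) +
        ∑ i : Fin m, (pSnd (mkProd (x t) (u (x t)))) i • g i.succ (pFst (mkProd (x t) (u (x t))))) ∈ W := by
    intro t ht
    have hmem := hxball t ht
    have hfst : pFst (mkProd (x t) (u (x t))) = x t := rfl
    have hsnd : pSnd (mkProd (x t) (u (x t))) = u (x t) := rfl
    rw [hfst, hsnd]
    exact W.add_mem (hUW _ hmem 0)
      (W.sum_mem fun i _ => W.smul_mem _ (hUW _ hmem i.succ))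
  -- the inner product with v is constant along the trajectory
  set L : Euc n →L[ℝ] ℝ := innerSL ℝ v with hL
  have hLW : ∀ w ∈ W, L w = 0 := by
    intro w hw
    have := (Submodule.mem_orthogonal W v).mp hvW w hw
    simpa [hL, real_inner_comm] using this
  have hconst : ∀ T ∈ Ici (0:ℝ), L (x T) = L (x 0) := by
    intro T hT
    have hder : ∀ t ∈ Ico (0:ℝ) T, HasDerivWithinAt (fun s => L (x s)) 0 (Ici t) t := by
      intro t ht
      have ht0 : t ∈ Ici (0:ℝ) := ht.1
      have h1 : HasDerivWithinAt x _ (Ici 0) t := hxd t ht0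
      have h2 := (L.hasFDerivAt.comp_hasDerivWithinAt t h1)
      have h3 : HasDerivWithinAt (fun s => L (x s)) 0 (Ici 0) t := by
        have hz := hLW _ (hvelW t ht0)
        have h4 : HasDerivWithinAt (⇑L ∘ x) 0 (Ici 0) t := by simpa [hz] using h2
        exact h4
      exact h3.mono (Ici_subset_Ici.mpr ht.1)
    have hcont : ContinuousOn (fun s => L (x s)) (Icc 0 T) := by
      apply ContinuousOn.mono _ (Icc_subset_Ici_self)
      exact fun t ht => (L.continuous.continuousAt).comp_continuousWithinAt ((hxd t ht).continuousWithinAt)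
    exact constant_of_has_deriv_right_zero hcont hder T (by exact ⟨hT, le_refl T⟩)
  -- L (x₀) > 0
  have hLx₀ : L x₀ = ε * ‖v‖ := by
    have h1 : L x₀ = (ε / ‖v‖) * inner ℝ v v := by
      rw [hx₀, hL]; exact real_inner_smul_right v v _
    rw [h1, real_inner_self_eq_norm_sq]
    field_simp
  have hLpos : 0 < L x₀ := by rw [hLx₀]; positivity
  -- but L (x t) → 0, contradiction
  have hbound : ∀ t ∈ Ici (0:ℝ), L x₀ ≤ ‖v‖ * (M * Real.exp (-α * t) * ‖x₀‖) := by
    intro t ht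
    have h1 : L x₀ = L (x t) := by rw [← hx0, ← hconst t ht]
    calc L x₀ = L (x t) := h1
      _ ≤ |L (x t)| := le_abs_self _
      _ ≤ ‖v‖ * ‖x t‖ := by
          rw [hL]
          simpa using abs_real_inner_le_norm v (x t)
      _ ≤ ‖v‖ * (M * Real.exp (-α * t) * ‖x₀‖) := by
          gcongr
          exact hxbound t ht
  have htend : Tendsto (fun t : ℝ => ‖v‖ * (M * Real.exp (-α * t) * ‖x₀‖)) atTop (nhds 0) := by
    have : Tendsto (fun t : ℝ => Real.exp (-α * t)) atTop (nhds 0) := by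
      apply Real.tendsto_exp_atBot.comp
      apply Tendsto.const_mul_atTop_of_neg (neg_neg_iff_pos.mpr hα) tendsto_id
    have h2 := (this.const_mul M).mul_const ‖x₀‖
    have h3 := h2.const_mul ‖v‖
    simpa using h3
  have : L x₀ ≤ 0 := by
    apply ge_of_tendsto htend
    filter_upwards [eventually_ge_atTop (0:ℝ)] with t ht
    exact hbound t ht
  linarith
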